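/- If B1 and B2 are finite-dimensional central simple algebras over a field E with coprime Schur indices, then ind(B1 ⊗_E B2) = ind(B1) · ind(B2). -/

import Mathlib

open scoped TensorProduct

/-- `d` is the Schur index of the central simple algebra `A` over `E`: the degree of the
division algebra Brauer-equivalent to `A`, i.e. `A ≅ Mₙ(D)` with `D` a division algebra of
dimension `d²` over `E`. -/
def IsSchurIndex (E A : Type) [Field E] [Ring A] [Algebra E A] (d : ℕ) : Prop :=
  ∃ (D : Type) (_ : DivisionRing D) (_ : Algebra E D) (n : ℕ), 0 < n ∧
    Nonempty (A ≃ₐ[E] Matrix (Fin n) (Fin n) D) ∧ d * d = Module.finrank E D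

open Module

-- aux 1: divisibility
lemma aux_dvd (E D A : Type) [Field E] [DivisionRing D] [Ring A]
    [Algebra E D] [Algebra E A] (f : D →ₐ[E] A) (I : Submodule A A) :
    finrank E D ∣ finrank E (I.restrictScalars E) := by
  letI : Module D ↥(I.restrictScalars E) := Module.compHom _ f.toRingHom
  haveI : IsScalarTower E D ↥(I.restrictScalars E) := by
    constructor
    intro e d x
    show (f (e • d)) • x = e • ((f d) • x)
    rw [map_smul]
    exact smul_assoc e (f d) x
  exact ⟨finrank D ↥(I.restrictScalars E), (Module.finrank_mul_finrank E D _).symm⟩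

-- aux 2: left inverses
lemma aux_leftinv (E D₁ D₂ : Type) [Field E] [DivisionRing D₁] [DivisionRing D₂]
    [Algebra E D₁] [Algebra E D₂] [FiniteDimensional E D₁] [FiniteDimensional E D₂]
    (hcop : Nat.Coprime (finrank E D₁) (finrank E D₂)) (a : D₁ ⊗[E] D₂) (ha : a ≠ 0) :
    ∃ b, b * a = 1 := by
  let A := D₁ ⊗[E] D₂
  let I : Submodule A A := Submodule.span A {a}
  have hmem : a ∈ I := Submodule.mem_span_singleton_self a
  have h1 : finrank E D₁ ∣ finrank E (I.restrictScalars E) :=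
    aux_dvd E D₁ A Algebra.TensorProduct.includeLeft I
  have h2 : finrank E D₂ ∣ finrank E (I.restrictScalars E) :=
    aux_dvd E D₂ A Algebra.TensorProduct.includeRight I
  have hdvd : finrank E D₁ * finrank E D₂ ∣ finrank E (I.restrictScalars E) :=
    hcop.mul_dvd_of_dvd_of_dvd h1 h2
  have hle : finrank E (I.restrictScalars E) ≤ finrank E A := Submodule.finrank_le _
  have hfr : finrank E A = finrank E D₁ * finrank E D₂ := Module.finrank_tensorProduct
  have hpos : 0 < finrank E (I.restrictScalars E) := by
    haveI : Nontrivial ↥(I.restrictScalars E) :=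
      ⟨⟨⟨a, hmem⟩, 0, fun h => ha (Subtype.ext_iff.mp h)⟩⟩
    exact finrank_pos
  have heq : finrank E (I.restrictScalars E) = finrank E A := by
    rw [hfr] at hle ⊢
    exact le_antisymm hle (Nat.le_of_dvd hpos hdvd)
  have htop : I.restrictScalars E = ⊤ :=
    Submodule.eq_top_of_finrank_eq heq
  have h1I : (1 : A) ∈ I := by
    have : (1 : A) ∈ I.restrictScalars E := htop ▸ Submodule.mem_top
    exact this
  obtain ⟨b, hb⟩ := Submodule.mem_span_singleton.mp h1I
  exact ⟨b, by rwa [smul_eq_mul] at hb⟩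

-- aux 3: division ring
noncomputable def aux_divisionRing (E D₁ D₂ : Type) [Field E] [DivisionRing D₁] [DivisionRing D₂]
    [Algebra E D₁] [Algebra E D₂] [FiniteDimensional E D₁] [FiniteDimensional E D₂]
    (hcop : Nat.Coprime (finrank E D₁) (finrank E D₂)) :
    DivisionRing (D₁ ⊗[E] D₂) := by
  haveI : Nontrivial (D₁ ⊗[E] D₂) := by
    rw [← Module.finrank_pos_iff (R := E), Module.finrank_tensorProduct]
    exact Nat.mul_pos finrank_pos finrank_pos
  refine DivisionRing.ofIsUnitOrEqZero fun a => ?_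
  rcases eq_or_ne a 0 with h | h
  · exact Or.inr h
  · refine Or.inl ?_
    obtain ⟨b, hb⟩ := aux_leftinv E D₁ D₂ hcop a h
    have hbne : b ≠ 0 := by
      rintro rfl; rw [zero_mul] at hb; exact one_ne_zero hb.symm
    obtain ⟨c, hc⟩ := aux_leftinv E D₁ D₂ hcop b hbne
    have hca : a = c := by
      have h2 : c * (b * a) = c := by rw [hb, mul_one]
      rwa [← mul_assoc, hc, one_mul] at h2
    exact ⟨⟨a, b, by rw [hca]; exact hc, hb⟩, rfl⟩

-- aux 4: the matrix equivalence
noncomputable def aux_matrixEquiv (E D₁ D₂ : Type) [Field E] [DivisionRing D₁] [DivisionRing D₂]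
    [Algebra E D₁] [Algebra E D₂] (n₁ n₂ : ℕ) :
    (Matrix (Fin n₁) (Fin n₁) D₁ ⊗[E] Matrix (Fin n₂) (Fin n₂) D₂) ≃ₐ[E]
      Matrix (Fin (n₁ * n₂)) (Fin (n₁ * n₂)) (D₁ ⊗[E] D₂) :=
  (Algebra.TensorProduct.congr (matrixEquivTensor (Fin n₁) E D₁)
      (matrixEquivTensor (Fin n₂) E D₂)).trans <|
  (Algebra.TensorProduct.tensorTensorTensorComm E E E E D₁ (Matrix (Fin n₁) (Fin n₁) E) D₂
      (Matrix (Fin n₂) (Fin n₂) E)).trans <|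
  (Algebra.TensorProduct.congr AlgEquiv.refl
    ((Algebra.TensorProduct.comm E _ _).trans <|
      ((matrixEquivTensor (Fin n₁) E (Matrix (Fin n₂) (Fin n₂) E)).symm).trans <|
      Matrix.compAlgEquiv (Fin n₁) (Fin n₂) E E)).trans <|
  ((matrixEquivTensor (Fin n₁ × Fin n₂) E (D₁ ⊗[E] D₂)).symm).trans <|
  Matrix.reindexAlgEquiv E _ finProdFinEquiv

-- aux 5: finite dimensionality of D from matrix iso
lemma aux_findim (E B D : Type) [Field E] [Ring B] [Algebra E B] [FiniteDimensional E B]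
    [Ring D] [Algebra E D] (n : ℕ) (hn : 0 < n)
    (e : B ≃ₐ[E] Matrix (Fin n) (Fin n) D) : FiniteDimensional E D := by
  let i : Fin n := ⟨0, hn⟩
  let f : Matrix (Fin n) (Fin n) D →ₗ[E] D :=
    { toFun := fun M => M i i
      map_add' := fun _ _ => rfl
      map_smul' := fun _ _ => rfl }
  refine Module.Finite.of_surjective (f.comp e.toLinearEquiv.toLinearMap) fun d => ?_
  exact ⟨e.symm (Matrix.of fun _ _ => d), by simp [f]; rfl⟩

theorem schurIndex_tensor_of_coprime' (E B₁ B₂ : Type) [Field E]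
    [Ring B₁] [Algebra E B₁] [FiniteDimensional E B₁]
    [Ring B₂] [Algebra E B₂] [FiniteDimensional E B₂]
    (d₁ d₂ : ℕ) (hd₁ : IsSchurIndex E B₁ d₁) (hd₂ : IsSchurIndex E B₂ d₂)
    (hcop : Nat.Coprime d₁ d₂) :
    IsSchurIndex E (B₁ ⊗[E] B₂) (d₁ * d₂) := by
  obtain ⟨D₁, iD₁, aD₁, n₁, hn₁, ⟨e₁⟩, hdim₁⟩ := hd₁
  obtain ⟨D₂, iD₂, aD₂, n₂, hn₂, ⟨e₂⟩, hdim₂⟩ := hd₂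
  letI := iD₁; letI := aD₁; letI := iD₂; letI := aD₂
  haveI : FiniteDimensional E D₁ := aux_findim E B₁ D₁ n₁ hn₁ e₁
  haveI : FiniteDimensional E D₂ := aux_findim E B₂ D₂ n₂ hn₂ e₂
  have hcop2 : Nat.Coprime (finrank E D₁) (finrank E D₂) := by
    rw [← hdim₁, ← hdim₂]
    exact (hcop.mul hcop).mul_right (hcop.mul hcop)
  have eqv0 : (B₁ ⊗[E] B₂) ≃ₐ[E]
      (Matrix (Fin n₁) (Fin n₁) D₁ ⊗[E] Matrix (Fin n₂) (Fin n₂) D₂) :=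
    Algebra.TensorProduct.congr e₁ e₂
  have eqv : (B₁ ⊗[E] B₂) ≃ₐ[E] Matrix (Fin (n₁ * n₂)) (Fin (n₁ * n₂)) (D₁ ⊗[E] D₂) :=
    eqv0.trans (aux_matrixEquiv E D₁ D₂ n₁ n₂)
  have hfr : (d₁ * d₂) * (d₁ * d₂) = finrank E (D₁ ⊗[E] D₂) := by
    rw [Module.finrank_tensorProduct, ← hdim₁, ← hdim₂]; ring
  refine ⟨D₁ ⊗[E] D₂, aux_divisionRing E D₁ D₂ hcop2, Algebra.TensorProduct.instAlgebra, n₁ * n₂,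
    Nat.mul_pos hn₁ hn₂, ⟨?_⟩, ?_⟩
  · exact eqv
  · exact hfr

/-- If `B₁`, `B₂` are finite-dimensional central simple algebras over a field `E` with
coprime Schur indices `d₁`, `d₂`, then the Schur index of `B₁ ⊗[E] B₂` is `d₁ * d₂`. -/
theorem schurIndex_tensor_of_coprime (E B₁ B₂ : Type) [Field E]
    [Ring B₁] [Algebra E B₁] [Algebra.IsCentral E B₁] [IsSimpleRing B₁] [FiniteDimensional E B₁]
    [Ring B₂] [Algebra E B₂] [Algebra.IsCentral E B₂] [IsSimpleRing B₂] [FiniteDimensional E B₂]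
    (d₁ d₂ : ℕ) (hd₁ : IsSchurIndex E B₁ d₁) (hd₂ : IsSchurIndex E B₂ d₂)
    (hcop : Nat.Coprime d₁ d₂) :
    IsSchurIndex E (B₁ ⊗[E] B₂) (d₁ * d₂) :=
  schurIndex_tensor_of_coprime' E B₁ B₂ d₁ d₂ hd₁ hd₂ hcop
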